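/- Let Σ = diag(λ_1, λ_2, λ_3) with λ_1 > λ_2 > λ_3 > 0, E a symmetric 3×3 matrix, λ̂ a real number not equal to λ_2 or λ_3, D₁ = diag(0, −1/(λ_2−λ̂), −1/(λ_3−λ̂)), P₁ = diag(0,1,1). Suppose η = (1, η_2, η_3)ᵀ satisfies (Σ+E)η = λ̂ η and I₃ − D₁ E P₁ is invertible. Then (0, η_2, η_3)ᵀ = (I₃ − D₁ E P₁)^{-1} D₁ (0, E_{21}, E_{31})ᵀ. -/
import Mathlib


open Matrix

/-- For `Σ = diag(λ₁,λ₂,λ₃)` with `λ₁ > λ₂ > λ₃ > 0`, `E` symmetric, `λ̂ ∉ {λ₂, λ₃}`,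
`D₁ = diag(0, -1/(λ₂-λ̂), -1/(λ₃-λ̂))`, `P₁ = diag(0,1,1)`, if `(Σ+E)η = λ̂η` with
`η = (1,η₂,η₃)ᵀ` and `I - D₁EP₁` is invertible, then
`(0,η₂,η₃)ᵀ = (I - D₁EP₁)⁻¹ D₁ (0, E₂₁, E₃₁)ᵀ`. -/
theorem stmt_12 (lam1 lam2 lam3 lamHat eta2 eta3 : ℝ)
    (h12 : lam2 < lam1) (h23 : lam3 < lam2) (h3 : 0 < lam3)
    (hne2 : lamHat ≠ lam2) (hne3 : lamHat ≠ lam3)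
    (E : Matrix (Fin 3) (Fin 3) ℝ) (hE : E.IsSymm)
    (heig : (Matrix.diagonal ![lam1, lam2, lam3] + E).mulVec ![1, eta2, eta3]
      = lamHat • ![1, eta2, eta3]) :
    let D1 : Matrix (Fin 3) (Fin 3) ℝ :=
      Matrix.diagonal ![0, -(lam2 - lamHat)⁻¹, -(lam3 - lamHat)⁻¹]
    let P1 : Matrix (Fin 3) (Fin 3) ℝ := Matrix.diagonal ![0, 1, 1]
    IsUnit (1 - D1 * E * P1) →
    (![0, eta2, eta3] : Fin 3 → ℝ)
      = ((1 - D1 * E * P1)⁻¹ * D1).mulVec ![0, E 1 0, E 2 0] := by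
  intro D1 P1 hInv
  have h2 := congrFun heig 1
  have h3' := congrFun heig 2
  simp [Matrix.mulVec, dotProduct, Fin.sum_univ_three, Matrix.diagonal,
    Matrix.add_apply] at h2 h3'
  have key : (1 - D1 * E * P1).mulVec ![0, eta2, eta3]
      = D1.mulVec ![0, E 1 0, E 2 0] := by
    funext i
    have hl2 : lam2 - lamHat ≠ 0 := sub_ne_zero.mpr (fun h => hne2 h.symm)
    have hl3 : lam3 - lamHat ≠ 0 := sub_ne_zero.mpr (fun h => hne3 h.symm)
    fin_cases i <;>
      simp [D1, P1, Matrix.mulVec, dotProduct, Fin.sum_univ_three,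
        Matrix.mul_apply, Matrix.diagonal, Matrix.sub_apply, Matrix.one_apply] <;>
      field_simp <;> nlinarith [h2, h3']
  have hd : IsUnit (1 - D1 * E * P1).det := (Matrix.isUnit_iff_isUnit_det _).mp hInv
  calc (![0, eta2, eta3] : Fin 3 → ℝ)
      = (1 : Matrix (Fin 3) (Fin 3) ℝ).mulVec ![0, eta2, eta3] := by simp
    _ = ((1 - D1 * E * P1)⁻¹ * (1 - D1 * E * P1)).mulVec ![0, eta2, eta3] := by
        rw [Matrix.nonsing_inv_mul _ hd]
    _ = ((1 - D1 * E * P1)⁻¹).mulVec ((1 - D1 * E * P1).mulVec ![0, eta2, eta3]) := by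
        rw [← Matrix.mulVec_mulVec]
    _ = ((1 - D1 * E * P1)⁻¹ * D1).mulVec ![0, E 1 0, E 2 0] := by
        rw [key, Matrix.mulVec_mulVec]
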